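/- Let A be a finite-dimensional algebra over an algebraically closed field K, and suppose the map λ ↦ λ' (defined by soc(P^λ) ≅ L^{λ'}) is an involution on the set Λ₀ of labels of projective-injective indecomposables. For λ, μ ∈ Λ₀ and any nonzero f ∈ Hom_A(P^λ, P^μ), there exist g ∈ Hom_A(P^μ, P^{λ'}) and h ∈ Hom_A(P^{μ'}, P^λ) such that g∘f = θ_λ and f∘h = θ_{μ'}, where θ_λ denotes a fixed nonzero homomorphism P^λ → P^{λ'} whose image equals soc(P^{λ'}). -/
import Mathlib


/-- The socle of a module: the largest semisimple submodule. -/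
def Socle (A M : Type) [Ring A] [AddCommGroup M] [Module A M] : Submodule A M :=
  ⨆ (p : Submodule A M) (_ : IsSimpleModule A ↥p), p

/-- The radical of a module: the intersection of all maximal submodules. -/
def Rad (A M : Type) [Ring A] [AddCommGroup M] [Module A M] : Submodule A M :=
  sInf {p : Submodule A M | IsCoatom p}


section Aux

variable {A : Type} [Ring A]

/-- In a module whose socle is an atom, every nonzero submodule contains the socle. -/
lemma socle_le_of_ne_bot {M : Type} [AddCommGroup M] [Module A M]
    [IsAtomic (Submodule A M)] (hs : IsAtom (Socle A M)) {N : Submodule A M} (hN : N ≠ ⊥) :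
    Socle A M ≤ N := by
  obtain ⟨S, hS, hSN⟩ := (IsAtomic.eq_bot_or_exists_atom_le N).resolve_left hN
  have h1 : S ≤ Socle A M := by
    have : IsSimpleModule A ↥S := isSimpleModule_iff_isAtom.2 hS
    exact le_iSup₂ (f := fun (p : Submodule A M) (_ : IsSimpleModule A ↥p) => p) S this
  have : S = Socle A M := by
    rcases lt_or_eq_of_le h1 with h | h
    · exact absurd (hs.2 _ h) hS.1
    · exact h
  exact this ▸ hSN

lemma cast_lin {Lam : Type} (P : Lam → Type) [∀ l, AddCommGroup (P l)] [∀ l, Module A (P l)]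
    {a b : Lam} (h : a = b) :
    ∃ c : P a →ₗ[A] P b, (∀ x, c x = cast (congrArg P h) x) ∧
      Submodule.map c (Socle A (P a)) = Socle A (P b) := by
  subst h
  exact ⟨LinearMap.id, fun _ => rfl, Submodule.map_id _⟩

end Aux

/-- With `λ ↦ λ'` an involution on `Λ₀` and `θ_λ : P^λ → P^{λ'}` the fixed
homomorphism with image `soc(P^{λ'})`, for any nonzero `f ∈ Hom_A(P^λ, P^μ)` with
`λ, μ ∈ Λ₀` there exist `g ∈ Hom_A(P^μ, P^{λ'})` and `h ∈ Hom_A(P^{μ'}, P^λ)` such that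
`g ∘ f = θ_λ` and `f ∘ h = θ_{μ'}` (the latter equality up to the canonical identification
`P^{μ''} = P^μ` given by the involution). -/
theorem stmt_1
    (K A : Type) [Field K] [IsAlgClosed K] [Ring A] [Algebra K A] [FiniteDimensional K A]
    (Lam : Type) (L P : Lam → Type)
    [∀ l, AddCommGroup (L l)] [∀ l, Module A (L l)] [∀ l, Module K (L l)]
    [∀ l, IsScalarTower K A (L l)] [∀ l, FiniteDimensional K (L l)]
    [∀ l, AddCommGroup (P l)] [∀ l, Module A (P l)] [∀ l, Module K (P l)]
    [∀ l, IsScalarTower K A (P l)] [∀ l, FiniteDimensional K (P l)]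
    (hsimple : ∀ l, IsSimpleModule A (L l))
    (hdistinct : ∀ l m, Nonempty (L l ≃ₗ[A] L m) → l = m)
    (hproj : ∀ l, Module.Projective A (P l))
    (hcover : ∀ l, ∃ π : P l →ₗ[A] L l, Function.Surjective π ∧ LinearMap.ker π = Rad A (P l))
    -- the map ' on Λ₀, an involution, with soc(P^λ) ≅ L^{λ'}
    (pr : Lam → Lam)
    (hpr : ∀ l, Module.Injective A (P l) → Nonempty (↥(Socle A (P l)) ≃ₗ[A] L (pr l)))
    (hprinj : ∀ l, Module.Injective A (P l) → Module.Injective A (P (pr l)))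
    (hprinv : ∀ l, Module.Injective A (P l) → pr (pr l) = l)
    -- the fixed maps θ_λ with image soc(P^{λ'})
    (θ : ∀ l, P l →ₗ[A] P (pr l))
    (hθ : ∀ l, Module.Injective A (P l) → LinearMap.range (θ l) = Socle A (P (pr l)))
    (l m : Lam) (hl : Module.Injective A (P l)) (hm : Module.Injective A (P m))
    (f : P l →ₗ[A] P m) (hf : f ≠ 0) :
    (∃ g : P m →ₗ[A] P (pr l), g.comp f = θ l) ∧
    (∃ h : P (pr m) →ₗ[A] P l, ∀ x : P (pr m),
      f (h x) = cast (congrArg P (hprinv m hm)) (θ (pr m) x)) := by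
  -- chain conditions
  have hart : ∀ j, IsArtinian A (P j) := fun j => isArtinian_of_tower K inferInstance
  have hnoe : ∀ j, IsNoetherian A (P j) := fun j => isNoetherian_of_tower K inferInstance
  have hatomic : ∀ j, IsAtomic (Submodule A (P j)) := fun j =>
    isAtomic_of_orderBot_wellFounded_lt (hart j).wf
  have hcoatomic : ∀ j, IsCoatomic (Submodule A (P j)) := fun j =>
    isCoatomic_of_orderTop_gt_wellFounded (hnoe j).wf
  -- socles are atoms
  have hsocle_atom : ∀ j, Module.Injective A (P j) → IsAtom (Socle A (P j)) := by
    intro j hj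
    obtain ⟨e⟩ := hpr j hj
    have : IsSimpleModule A ↥(Socle A (P j)) := IsSimpleModule.congr e
    exact isSimpleModule_iff_isAtom.1 this
  constructor
  · -- Part 1: extend θ l along f
    -- ker (θ l) is a coatom
    have hrange : LinearMap.range (θ l) = Socle A (P (pr l)) := hθ l hl
    have hsimp_range : IsSimpleModule A ↥(LinearMap.range (θ l)) := by
      obtain ⟨e⟩ := hpr (pr l) (hprinj l hl)
      exact IsSimpleModule.congr ((LinearEquiv.ofEq _ _ hrange).trans e)
    have hker_coatom : IsCoatom (LinearMap.ker (θ l)) := by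
      rw [← isSimpleModule_iff_isCoatom]
      exact IsSimpleModule.congr (θ l).quotKerEquivRange
    -- Rad (P l) is a coatom
    obtain ⟨π, hπs, hπk⟩ := hcover l
    have hrad_coatom : IsCoatom (Rad A (P l)) := by
      rw [← hπk, ← isSimpleModule_iff_isCoatom]
      exact IsSimpleModule.congr (π.quotKerEquivOfSurjective hπs)
    -- any coatom equals Rad
    have huniq : ∀ X : Submodule A (P l), IsCoatom X → X = Rad A (P l) := by
      intro X hX
      have hle : Rad A (P l) ≤ X := sInf_le hX
      rcases lt_or_eq_of_le hle with h | h
      · exact absurd (hrad_coatom.2 _ h) hX.1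
      · exact h.symm
    -- ker f ≤ ker (θ l)
    have hkf : LinearMap.ker f ≤ LinearMap.ker (θ l) := by
      have hne : LinearMap.ker f ≠ ⊤ := fun h => hf (LinearMap.ker_eq_top.1 h)
      obtain ⟨X, hX, hle⟩ :=
        ((hcoatomic l).eq_top_or_exists_le_coatom (LinearMap.ker f)).resolve_left hne
      rw [huniq X hX, ← huniq _ hker_coatom] at hle
      exact hle
    -- factor θ l through range f
    let g₀ : ↥(LinearMap.range f) →ₗ[A] P (pr l) :=
      ((LinearMap.ker f).liftQ (θ l) hkf).comp (f.quotKerEquivRange).symm.toLinearMap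
    have hg₀ : ∀ x : P l, g₀ (f.rangeRestrict x) = θ l x := by
      intro x
      have : (f.quotKerEquivRange).symm (f.rangeRestrict x) =
          Submodule.Quotient.mk x := by
        apply (f.quotKerEquivRange).injective
        simp [LinearMap.quotKerEquivRange]
        rfl
      simp only [g₀, LinearMap.comp_apply, LinearEquiv.coe_toLinearMap, this]
      rfl
    -- extend along the inclusion using injectivity of P (pr l)
    obtain ⟨g, hg⟩ := (hprinj l hl).out (LinearMap.range f).subtype
      (Submodule.injective_subtype _) g₀
    refine ⟨g, LinearMap.ext fun x => ?_⟩
    have := hg (f.rangeRestrict x)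
    simpa [hg₀ x] using this
  · -- Part 2: lift θ (pr m) through f
    obtain ⟨c, hc, hcs⟩ := cast_lin (A := A) P (hprinv m hm)
    have hrange' : LinearMap.range (θ (pr m)) = Socle A (P (pr (pr m))) :=
      hθ (pr m) (hprinj m hm)
    have hrange_c : LinearMap.range (c.comp (θ (pr m))) = Socle A (P m) := by
      rw [LinearMap.range_comp, hrange', hcs]
    have hfle : Socle A (P m) ≤ LinearMap.range f := by
      refine socle_le_of_ne_bot (hsocle_atom m hm) ?_
      rw [Ne, LinearMap.range_eq_bot]
      exact hf
    have hle : LinearMap.range (c.comp (θ (pr m))) ≤ LinearMap.range f := by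
      rw [hrange_c]; exact hfle
    -- lift by projectivity of P (pr m)
    have hsurj : Function.Surjective f.rangeRestrict := f.surjective_rangeRestrict
    obtain ⟨h, hh⟩ := Module.projective_lifting_property (R := A) f.rangeRestrict
      ((c.comp (θ (pr m))).codRestrict (LinearMap.range f) fun x => hle ⟨x, rfl⟩) hsurj
    refine ⟨h, fun x => ?_⟩
    have := congrArg (fun φ => ((φ : P (pr m) →ₗ[A] ↥(LinearMap.range f)) x : P m)) hh
    simpa [hc (θ (pr m) x)] using this
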